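/- Suppose u^n: Ω_h → ℝ³ satisfies 𝒟·u^n = 0 on Ω_h∖∂Ω_h and u^n = 0 on ∂Ω_h. Then for any h, τ > 0 the implicit finite-difference system for ũ^{n+1}: Ω_h → ℝ³ with ũ^{n+1} = 0 on ∂Ω_h, given by (ũ^{n+1}(x) - u^n(x))/τ = -(1/2)∑_{j=1}³ (u^n_j(x-he^j) D_j ũ^{n+1}(x-he^j) + u^n_j(x+he^j) D_j ũ^{n+1}(x+he^j)) + ∑_{j=1}³ D_j² ũ^{n+1}(x) + f^n(x) for x ∈ Ω_h∖∂Ω_h, is uniquely solvable (the associated square linear system is invertible). -/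

import Mathlib

open Finset Real

/-- Lattice points of the grid (indices; the physical point is `h • x`). -/
abbrev Pt := Fin 3 → ℤ

/-- Standard basis vector of the lattice. -/
def ee (i : Fin 3) : Pt := fun j => if j = i then 1 else 0

/-- Central difference `D_i φ(x) = (φ(x+he^i) - φ(x-he^i))/(2h)`. -/
noncomputable def Dc (h : ℝ) (i : Fin 3) (φ : Pt → ℝ) (x : Pt) : ℝ :=
  (φ (x + ee i) - φ (x - ee i)) / (2 * h)

/-- Forward difference `D_i⁺ φ(x) = (φ(x+he^i) - φ(x))/h`. -/
noncomputable def Dp (h : ℝ) (i : Fin 3) (φ : Pt → ℝ) (x : Pt) : ℝ :=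
  (φ (x + ee i) - φ x) / h

/-- Second difference `D_i² φ(x) = (φ(x+he^i)+φ(x-he^i)-2φ(x))/h²`. -/
noncomputable def D2 (h : ℝ) (i : Fin 3) (φ : Pt → ℝ) (x : Pt) : ℝ :=
  (φ (x + ee i) + φ (x - ee i) - 2 * φ x) / h ^ 2

/-- Central-difference divergence `𝒟·u`. -/
noncomputable def divc (h : ℝ) (u : Pt → Fin 3 → ℝ) (x : Pt) : ℝ :=
  ∑ i, Dc h i (fun y => u y i) x

open scoped Classical in
/-- Discrete boundary `∂Ω_h = {x ∈ Ω_h : {x ± he^i} ⊄ Ω_h}`. -/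
noncomputable def bdry (Ω : Finset Pt) : Finset Pt :=
  Ω.filter (fun x => ∃ i : Fin 3, x + ee i ∉ Ω ∨ x - ee i ∉ Ω)

/-- Parity class (one of the eight classes G¹,…,G⁸) of a grid point. -/
def parity (x : Pt) : Fin 3 → ZMod 2 := fun i => (x i : ZMod 2)

open scoped Classical in
/-- The interior sub-grid `Ω_h^∘`. -/
noncomputable def circInt (Ω : Finset Pt) : Finset Pt :=
  (Ω \ bdry Ω).filter
    (fun x => ∀ a : Fin 3 → ℤ, (∀ i, 0 ≤ a i ∧ a i ≤ 2) → x + a ∈ Ω \ bdry Ω)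

open scoped Classical in
/-- The parity class `Ω_h^{∘j}` of the interior sub-grid. -/
noncomputable def circJ (Ω : Finset Pt) (p : Fin 3 → ZMod 2) : Finset Pt :=
  (circInt Ω).filter (fun x => parity x = p)

open scoped Pointwise

noncomputable def SS (Ω : Finset Pt) : Finset Pt := Ω + Finset.Icc (fun _ => (-4:ℤ)) (fun _ => 4)

lemma mem_SS {Ω : Finset Pt} {y b : Pt} (hy : y ∈ Ω) (hb : ∀ i, |b i| ≤ 4) : y + b ∈ SS Ω := by
  refine Finset.add_mem_add hy ?_
  simp only [Finset.mem_Icc]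
  constructor <;> intro i <;> have := abs_le.mp (hb i) <;> simp <;> omega

lemma I_subset_SS (Ω : Finset Pt) : Ω \ bdry Ω ⊆ SS Ω := by
  intro x hx
  have hx' : x ∈ Ω := (Finset.mem_sdiff.mp hx).1
  have := mem_SS (Ω := Ω) (b := 0) hx' (by intro i; simp)
  simpa using this

lemma sum_shift (Ω : Finset Pt) (g : Pt → ℝ) (a : Pt)
    (hg : ∀ x, x ∉ Ω \ bdry Ω → g x = 0) (ha : ∀ i, |a i| ≤ 4) :
    ∑ x ∈ SS Ω, g (x + a) = ∑ x ∈ SS Ω, g x := by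
  have key : ∀ b : Pt, (∀ i, |b i| ≤ 4) →
      ∑ x ∈ SS Ω, g (x + b) = ∑ x ∈ Ω \ bdry Ω, g x := by
    intro b hb
    have hinj : ∀ x ∈ SS Ω, ∀ y ∈ SS Ω, x + b = y + b → x = y := by
      intro x _ y _ hxy; exact add_right_cancel hxy
    rw [← Finset.sum_image hinj]
    refine (Finset.sum_subset ?_ ?_).symm
    · intro y hy
      have hy' : y ∈ Ω := (Finset.mem_sdiff.mp hy).1
      refine Finset.mem_image.mpr ⟨y + (-b), ?_, by abel⟩
      exact mem_SS hy' (by intro i; simpa using hb i)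
    · intro y _ hy; exact hg y hy
  rw [key a ha, ← key 0 (by intro i; simp)]
  simp

@[simp] lemma pt_sub_add_ee (x : Pt) (j : Fin 3) : x - ee j + ee j = x := by abel
@[simp] lemma pt_add_sub_ee (x : Pt) (j : Fin 3) : x + ee j - ee j = x := by abel

lemma ee_abs_le (j k : Fin 3) : |ee j k| ≤ 4 := by
  by_cases hk : k = j <;> simp [ee, hk]

lemma homog_zero (h τ : ℝ) (hh : 0 < h) (hτ : 0 < τ) (Ω : Finset Pt)
    (un : Pt → Fin 3 → ℝ) (hdiv : ∀ x ∈ Ω \ bdry Ω, divc h un x = 0)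
    (w : Pt → Fin 3 → ℝ) (hw0 : ∀ x, x ∉ Ω \ bdry Ω → w x = 0)
    (heq : ∀ x ∈ Ω \ bdry Ω, ∀ i : Fin 3,
      w x i / τ
        + 1/2 * (∑ j, (un (x - ee j) j * Dc h j (fun y => w y i) (x - ee j)
            + un (x + ee j) j * Dc h j (fun y => w y i) (x + ee j)))
        - (∑ j, D2 h j (fun y => w y i) x) = 0) :
    ∀ x, w x = 0 := by
  have hQ : ∀ i : Fin 3, ∀ x ∈ SS Ω, w x i = 0 := by
    intro i
    -- shift identities
    have hM : ∀ j : Fin 3, ∑ x ∈ SS Ω, w x i * w (x - ee j) i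
        = ∑ x ∈ SS Ω, w x i * w (x + ee j) i := by
      intro j
      have hs := sum_shift Ω (fun x => w x i * w (x - ee j) i) (ee j)
        (fun x hx => by simp [congrFun (hw0 x hx) i]) (fun k => ee_abs_le j k)
      rw [← hs]
      refine Finset.sum_congr rfl fun x _ => ?_
      simp only [pt_add_sub_ee]
      ring
    have hQs : ∀ j : Fin 3, ∑ x ∈ SS Ω, w (x + ee j) i ^ 2 = ∑ x ∈ SS Ω, w x i ^ 2 := by
      intro j
      exact sum_shift Ω (fun x => w x i ^ 2) (ee j)
        (fun x hx => by simp [congrFun (hw0 x hx) i]) (fun k => ee_abs_le j k)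
    have hC : ∀ j : Fin 3, ∑ x ∈ SS Ω, un (x - ee j) j * (w x i * w (x - ee j - ee j) i)
        = ∑ x ∈ SS Ω, un (x + ee j) j * (w x i * w (x + ee j + ee j) i) := by
      intro j
      have hs := sum_shift Ω (fun x => un (x + ee j) j * (w x i * w (x + ee j + ee j) i))
        (-ee j + -ee j)
        (fun x hx => by simp [congrFun (hw0 x hx) i])
        (fun k => by by_cases hk : k = j <;> simp [ee, hk])
      rw [← hs]
      refine Finset.sum_congr rfl fun x _ => ?_
      have e1 : x + (-ee j + -ee j) + ee j = x - ee j := by abel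
      have e2 : x + (-ee j + -ee j) = x - ee j - ee j := by abel
      have e3 : x + (-ee j + -ee j) + ee j + ee j = x := by abel
      simp only [e1, e2, e3]
      ring
    have hDiv : ∀ x ∈ SS Ω, w x i ^ 2 * (∑ j, (un (x - ee j) j - un (x + ee j) j)) = 0 := by
      intro x _
      by_cases hx : x ∈ Ω \ bdry Ω
      · have h0 := hdiv x hx
        have h2 : (2 : ℝ) * h ≠ 0 := by positivity
        unfold divc Dc at h0
        rw [← Finset.sum_div] at h0
        have hsum : ∑ j, (un (x + ee j) j - un (x - ee j) j) = 0 :=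
          (div_eq_zero_iff.mp h0).resolve_right h2
        have hneg : ∑ j, (un (x - ee j) j - un (x + ee j) j)
            = - ∑ j, (un (x + ee j) j - un (x - ee j) j) := by
          rw [← Finset.sum_neg_distrib]
          exact Finset.sum_congr rfl fun j _ => by ring
        rw [hneg, hsum, neg_zero, mul_zero]
      · simp [congrFun (hw0 x hx) i]
    -- pointwise expansion
    have hpt : ∀ x : Pt,
        w x i * (w x i / τ
          + 1/2 * (∑ j, (un (x - ee j) j * Dc h j (fun y => w y i) (x - ee j)
              + un (x + ee j) j * Dc h j (fun y => w y i) (x + ee j)))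
          - (∑ j, D2 h j (fun y => w y i) x))
        = w x i ^ 2 / τ
          + (1/(4*h)) * ∑ j, (un (x - ee j) j * (w x i ^ 2 - w x i * w (x - ee j - ee j) i)
              + un (x + ee j) j * (w x i * w (x + ee j + ee j) i - w x i ^ 2))
          - (1/h^2) * ∑ j, (w x i * w (x + ee j) i + w x i * w (x - ee j) i - 2 * w x i ^ 2) := by
      intro x
      have e1 : ∑ j, w x i * (un (x - ee j) j * Dc h j (fun y => w y i) (x - ee j)
            + un (x + ee j) j * Dc h j (fun y => w y i) (x + ee j))
          = (1/(2*h)) * ∑ j, (un (x - ee j) j * (w x i ^ 2 - w x i * w (x - ee j - ee j) i)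
              + un (x + ee j) j * (w x i * w (x + ee j + ee j) i - w x i ^ 2)) := by
        rw [Finset.mul_sum]
        refine Finset.sum_congr rfl fun j _ => ?_
        simp only [Dc, pt_sub_add_ee, pt_add_sub_ee]
        field_simp
      have e2 : ∑ j, w x i * D2 h j (fun y => w y i) x
          = (1/h^2) * ∑ j, (w x i * w (x + ee j) i + w x i * w (x - ee j) i - 2 * w x i ^ 2) := by
        rw [Finset.mul_sum]
        refine Finset.sum_congr rfl fun j _ => ?_
        simp only [D2]
        field_simp
      rw [show ∀ (a b s c : ℝ), a * (b + 1/2 * s - c) = a * b + 1/2 * (a * s) - a * c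
        from fun a b s c => by ring]
      rw [Finset.mul_sum _ _ (w x i), Finset.mul_sum _ _ (w x i), e1, e2]
      field_simp
      ring
    -- the energy identity
    have hE : ∑ x ∈ SS Ω, w x i * (w x i / τ
          + 1/2 * (∑ j, (un (x - ee j) j * Dc h j (fun y => w y i) (x - ee j)
              + un (x + ee j) j * Dc h j (fun y => w y i) (x + ee j)))
          - (∑ j, D2 h j (fun y => w y i) x)) = 0 := by
      apply Finset.sum_eq_zero
      intro x _
      by_cases hx : x ∈ Ω \ bdry Ω
      · rw [heq x hx i, mul_zero]
      · simp [congrFun (hw0 x hx) i]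
    have hE2 : (∑ x ∈ SS Ω, w x i ^ 2) / τ
        + (1/(4*h)) * ∑ x ∈ SS Ω, ∑ j, (un (x - ee j) j * (w x i ^ 2 - w x i * w (x - ee j - ee j) i)
            + un (x + ee j) j * (w x i * w (x + ee j + ee j) i - w x i ^ 2))
        - (1/h^2) * ∑ x ∈ SS Ω, ∑ j, (w x i * w (x + ee j) i + w x i * w (x - ee j) i - 2 * w x i ^ 2) = 0 := by
      have := (Finset.sum_congr rfl fun x (_ : x ∈ SS Ω) => (hpt x).symm).trans hE
      rw [Finset.sum_sub_distrib, Finset.sum_add_distrib, ← Finset.sum_div,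
        ← Finset.mul_sum, ← Finset.mul_sum] at this
      exact this
    have hP0 : ∑ x ∈ SS Ω, ∑ j, (un (x - ee j) j * (w x i ^ 2 - w x i * w (x - ee j - ee j) i)
        + un (x + ee j) j * (w x i * w (x + ee j + ee j) i - w x i ^ 2)) = 0 := by
      rw [Finset.sum_comm]
      have hj : ∀ j : Fin 3, ∑ x ∈ SS Ω, (un (x - ee j) j * (w x i ^ 2 - w x i * w (x - ee j - ee j) i)
          + un (x + ee j) j * (w x i * w (x + ee j + ee j) i - w x i ^ 2))
          = ∑ x ∈ SS Ω, w x i ^ 2 * (un (x - ee j) j - un (x + ee j) j) := by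
        intro j
        have split : ∀ x : Pt, (un (x - ee j) j * (w x i ^ 2 - w x i * w (x - ee j - ee j) i)
            + un (x + ee j) j * (w x i * w (x + ee j + ee j) i - w x i ^ 2))
            = w x i ^ 2 * (un (x - ee j) j - un (x + ee j) j)
              + (un (x + ee j) j * (w x i * w (x + ee j + ee j) i)
                - un (x - ee j) j * (w x i * w (x - ee j - ee j) i)) := fun x => by ring
        rw [Finset.sum_congr rfl fun x _ => split x, Finset.sum_add_distrib,
          Finset.sum_sub_distrib, ← hC j, sub_self, add_zero]
      rw [Finset.sum_congr rfl fun j (_ : j ∈ univ) => hj j, Finset.sum_comm]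
      apply Finset.sum_eq_zero
      intro x hx
      rw [← Finset.mul_sum]
      exact hDiv x hx
    have hq : ∀ j : Fin 3, ∑ x ∈ SS Ω, (w x i * w (x + ee j) i + w x i * w (x - ee j) i - 2 * w x i ^ 2)
        = 2 * (∑ x ∈ SS Ω, w x i * w (x + ee j) i) - 2 * ∑ x ∈ SS Ω, w x i ^ 2 := by
      intro j
      rw [Finset.sum_sub_distrib, Finset.sum_add_distrib, hM j, ← Finset.mul_sum]
      ring
    have hRQ : ∀ j : Fin 3, ∑ x ∈ SS Ω, w x i * w (x + ee j) i ≤ ∑ x ∈ SS Ω, w x i ^ 2 := by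
      intro j
      have h0 : (0:ℝ) ≤ ∑ x ∈ SS Ω, (w (x + ee j) i - w x i) ^ 2 :=
        Finset.sum_nonneg fun x _ => sq_nonneg _
      have hexp : ∑ x ∈ SS Ω, (w (x + ee j) i - w x i) ^ 2
          = (∑ x ∈ SS Ω, w (x + ee j) i ^ 2 + ∑ x ∈ SS Ω, w x i ^ 2)
            - 2 * ∑ x ∈ SS Ω, w x i * w (x + ee j) i := by
        rw [← Finset.sum_add_distrib, Finset.mul_sum, ← Finset.sum_sub_distrib]
        exact Finset.sum_congr rfl fun x _ => by ring
      rw [hexp, hQs j] at h0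
      linarith
    rw [hP0, mul_zero, add_zero, Finset.sum_comm,
      Finset.sum_congr rfl fun j (_ : j ∈ univ) => hq j] at hE2
    have hsum_le : ∑ j : Fin 3, (2 * (∑ x ∈ SS Ω, w x i * w (x + ee j) i)
        - 2 * ∑ x ∈ SS Ω, w x i ^ 2) ≤ 0 :=
      Finset.sum_nonpos fun j _ => by have := hRQ j; linarith
    have hQnn : (0:ℝ) ≤ ∑ x ∈ SS Ω, w x i ^ 2 := Finset.sum_nonneg fun x _ => sq_nonneg _
    have hhsq : (0:ℝ) < 1/h^2 := by positivity
    have hmul : (1/h^2) * ∑ j : Fin 3, (2 * (∑ x ∈ SS Ω, w x i * w (x + ee j) i)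
        - 2 * ∑ x ∈ SS Ω, w x i ^ 2) ≤ 0 :=
      mul_nonpos_iff.mpr (Or.inl ⟨hhsq.le, hsum_le⟩)
    have h1 : (∑ x ∈ SS Ω, w x i ^ 2) / τ ≤ 0 := by linarith
    have h2 : ∑ x ∈ SS Ω, w x i ^ 2 ≤ 0 := by
      have h3 : (∑ x ∈ SS Ω, w x i ^ 2) / τ * τ ≤ 0 :=
        mul_nonpos_iff.mpr (Or.inr ⟨h1, hτ.le⟩)
      rwa [div_mul_cancel₀ _ (ne_of_gt hτ)] at h3
    have hQ0 : ∑ x ∈ SS Ω, w x i ^ 2 = 0 := le_antisymm h2 hQnn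
    intro x hxS
    have := (Finset.sum_eq_zero_iff_of_nonneg (fun x _ => sq_nonneg (w x i))).mp hQ0 x hxS
    exact (pow_eq_zero_iff (two_ne_zero)).mp this
  intro x
  by_cases hx : x ∈ Ω \ bdry Ω
  · funext i
    exact hQ i x (I_subset_SS Ω hx)
  · exact hw0 x hx

noncomputable def Phi (h τ : ℝ) (un : Pt → Fin 3 → ℝ) (w : Pt → Fin 3 → ℝ) (x : Pt) (i : Fin 3) : ℝ :=
  w x i / τ
    + 1/2 * (∑ j, (un (x - ee j) j * Dc h j (fun y => w y i) (x - ee j)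
        + un (x + ee j) j * Dc h j (fun y => w y i) (x + ee j)))
    - ∑ j, D2 h j (fun y => w y i) x

lemma Phi_add (h τ : ℝ) (un w1 w2 : Pt → Fin 3 → ℝ) (x : Pt) (i : Fin 3) :
    Phi h τ un (w1 + w2) x i = Phi h τ un w1 x i + Phi h τ un w2 x i := by
  have e1 : ∑ j, (un (x - ee j) j * Dc h j (fun y => w1 y i + w2 y i) (x - ee j)
      + un (x + ee j) j * Dc h j (fun y => w1 y i + w2 y i) (x + ee j))
      = ∑ j, ((un (x - ee j) j * Dc h j (fun y => w1 y i) (x - ee j)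
        + un (x + ee j) j * Dc h j (fun y => w1 y i) (x + ee j))
        + (un (x - ee j) j * Dc h j (fun y => w2 y i) (x - ee j)
        + un (x + ee j) j * Dc h j (fun y => w2 y i) (x + ee j))) := by
    refine Finset.sum_congr rfl fun j _ => ?_
    simp only [Dc, Pi.add_apply]
    ring
  have e2 : ∑ j, D2 h j (fun y => w1 y i + w2 y i) x
      = ∑ j, (D2 h j (fun y => w1 y i) x + D2 h j (fun y => w2 y i) x) := by
    refine Finset.sum_congr rfl fun j _ => ?_
    simp only [D2, Pi.add_apply]
    ring
  simp only [Phi, Pi.add_apply]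
  rw [e1, e2]
  simp only [Finset.sum_add_distrib]
  ring

lemma Phi_smul (h τ : ℝ) (un : Pt → Fin 3 → ℝ) (c : ℝ) (w : Pt → Fin 3 → ℝ) (x : Pt) (i : Fin 3) :
    Phi h τ un (c • w) x i = c * Phi h τ un w x i := by
  have e1 : ∑ j, (un (x - ee j) j * Dc h j (fun y => c * w y i) (x - ee j)
      + un (x + ee j) j * Dc h j (fun y => c * w y i) (x + ee j))
      = ∑ j, (c * (un (x - ee j) j * Dc h j (fun y => w y i) (x - ee j)
        + un (x + ee j) j * Dc h j (fun y => w y i) (x + ee j))) := by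
    refine Finset.sum_congr rfl fun j _ => ?_
    simp only [Dc, Pi.smul_apply, smul_eq_mul]
    ring
  have e2 : ∑ j, D2 h j (fun y => c * w y i) x
      = ∑ j, (c * D2 h j (fun y => w y i) x) := by
    refine Finset.sum_congr rfl fun j _ => ?_
    simp only [D2, Pi.smul_apply, smul_eq_mul]
    ring
  simp only [Phi, Pi.smul_apply, smul_eq_mul]
  rw [e1, e2, ← Finset.mul_sum, ← Finset.mul_sum]
  ring

noncomputable def extI (Ω : Finset Pt) (v : ↥(Ω \ bdry Ω) → Fin 3 → ℝ) : Pt → Fin 3 → ℝ :=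
  fun x => if hx : x ∈ Ω \ bdry Ω then v ⟨x, hx⟩ else 0

lemma extI_add (Ω : Finset Pt) (v1 v2 : ↥(Ω \ bdry Ω) → Fin 3 → ℝ) :
    extI Ω (v1 + v2) = extI Ω v1 + extI Ω v2 := by
  funext x i
  simp only [extI, Pi.add_apply]
  split <;> simp

lemma extI_smul (Ω : Finset Pt) (c : ℝ) (v : ↥(Ω \ bdry Ω) → Fin 3 → ℝ) :
    extI Ω (c • v) = c • extI Ω v := by
  funext x i
  simp only [extI, Pi.smul_apply]
  split <;> simp

noncomputable def Lmap (h τ : ℝ) (Ω : Finset Pt) (un : Pt → Fin 3 → ℝ) :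
    (↥(Ω \ bdry Ω) → Fin 3 → ℝ) →ₗ[ℝ] (↥(Ω \ bdry Ω) → Fin 3 → ℝ) where
  toFun v := fun x i => Phi h τ un (extI Ω v) x i
  map_add' v1 v2 := by
    funext x i
    simp only [extI_add, Pi.add_apply]
    exact Phi_add h τ un (extI Ω v1) (extI Ω v2) x i
  map_smul' c v := by
    funext x i
    simp only [extI_smul, Pi.smul_apply, smul_eq_mul, RingHom.id_apply]
    exact Phi_smul h τ un c (extI Ω v) x i

/-- **Unconditional solvability of the implicit step** (Theorem 2.6): if
`𝒟·uⁿ = 0` on `Ω_h∖∂Ω_h` and `uⁿ = 0` on `∂Ω_h`, then for any mesh sizes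
`h, τ > 0` the implicit advection–diffusion system for `ũⁿ⁺¹` (with zero
boundary values) has a unique solution. -/
theorem implicit_step_unique_solvable (h τ : ℝ) (hh : 0 < h) (hτ : 0 < τ)
    (Ω : Finset Pt) (un f : Pt → Fin 3 → ℝ)
    (hun0 : ∀ x ∉ Ω, un x = 0)
    (hdiv : ∀ x ∈ Ω \ bdry Ω, divc h un x = 0)
    (hunb : ∀ x ∈ bdry Ω, un x = 0) :
    ∃! ut : Pt → Fin 3 → ℝ,
      (∀ x ∉ Ω, ut x = 0) ∧ (∀ x ∈ bdry Ω, ut x = 0) ∧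
      (∀ x ∈ Ω \ bdry Ω, ∀ i : Fin 3,
        (ut x i - un x i) / τ =
          -(1 / 2) * (∑ j, (un (x - ee j) j * Dc h j (fun y => ut y i) (x - ee j)
              + un (x + ee j) j * Dc h j (fun y => ut y i) (x + ee j)))
          + (∑ j, D2 h j (fun y => ut y i) x) + f x i) := by
  classical
  have huniq : ∀ u1 u2 : Pt → Fin 3 → ℝ,
      ((∀ x ∉ Ω, u1 x = 0) ∧ (∀ x ∈ bdry Ω, u1 x = 0) ∧
        (∀ x ∈ Ω \ bdry Ω, ∀ i : Fin 3,
          (u1 x i - un x i) / τ =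
            -(1 / 2) * (∑ j, (un (x - ee j) j * Dc h j (fun y => u1 y i) (x - ee j)
                + un (x + ee j) j * Dc h j (fun y => u1 y i) (x + ee j)))
            + (∑ j, D2 h j (fun y => u1 y i) x) + f x i)) →
      ((∀ x ∉ Ω, u2 x = 0) ∧ (∀ x ∈ bdry Ω, u2 x = 0) ∧
        (∀ x ∈ Ω \ bdry Ω, ∀ i : Fin 3,
          (u2 x i - un x i) / τ =
            -(1 / 2) * (∑ j, (un (x - ee j) j * Dc h j (fun y => u2 y i) (x - ee j)
                + un (x + ee j) j * Dc h j (fun y => u2 y i) (x + ee j)))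
            + (∑ j, D2 h j (fun y => u2 y i) x) + f x i)) →
      u1 = u2 := by
    intro u1 u2 hp1 hp2
    obtain ⟨h10, h1b, h1e⟩ := hp1
    obtain ⟨h20, h2b, h2e⟩ := hp2
    have hw0 : ∀ x, x ∉ Ω \ bdry Ω → (fun x i => u1 x i - u2 x i : Pt → Fin 3 → ℝ) x = 0 := by
      intro x hx
      have hx' : x ∉ Ω ∨ x ∈ bdry Ω := by
        by_contra hcon
        push_neg at hcon
        exact hx (Finset.mem_sdiff.mpr ⟨hcon.1, hcon.2⟩)
      funext i
      rcases hx' with hc | hc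
      · simp [congrFun (h10 x hc) i, congrFun (h20 x hc) i]
      · simp [congrFun (h1b x hc) i, congrFun (h2b x hc) i]
    have hweq : ∀ x ∈ Ω \ bdry Ω, ∀ i : Fin 3,
        (u1 x i - u2 x i) / τ
          + 1/2 * (∑ j, (un (x - ee j) j * Dc h j (fun y => u1 y i - u2 y i) (x - ee j)
              + un (x + ee j) j * Dc h j (fun y => u1 y i - u2 y i) (x + ee j)))
          - (∑ j, D2 h j (fun y => u1 y i - u2 y i) x) = 0 := by
      intro x hx i
      have e1 := h1e x hx i
      have e2 := h2e x hx i
      have hDc : ∀ (j : Fin 3) (z : Pt), Dc h j (fun y => u1 y i - u2 y i) z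
          = Dc h j (fun y => u1 y i) z - Dc h j (fun y => u2 y i) z := by
        intro j z; simp only [Dc]; ring
      have hD2' : ∀ (j : Fin 3) (z : Pt), D2 h j (fun y => u1 y i - u2 y i) z
          = D2 h j (fun y => u1 y i) z - D2 h j (fun y => u2 y i) z := by
        intro j z; simp only [D2]; ring
      simp only [hDc, hD2']
      have s1 : ∑ j, (un (x - ee j) j * (Dc h j (fun y => u1 y i) (x - ee j)
              - Dc h j (fun y => u2 y i) (x - ee j))
          + un (x + ee j) j * (Dc h j (fun y => u1 y i) (x + ee j)
              - Dc h j (fun y => u2 y i) (x + ee j)))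
          = (∑ j, (un (x - ee j) j * Dc h j (fun y => u1 y i) (x - ee j)
              + un (x + ee j) j * Dc h j (fun y => u1 y i) (x + ee j)))
            - ∑ j, (un (x - ee j) j * Dc h j (fun y => u2 y i) (x - ee j)
              + un (x + ee j) j * Dc h j (fun y => u2 y i) (x + ee j)) := by
        rw [← Finset.sum_sub_distrib]
        exact Finset.sum_congr rfl fun j _ => by ring
      have s2 : ∑ j, (D2 h j (fun y => u1 y i) x - D2 h j (fun y => u2 y i) x)
          = (∑ j, D2 h j (fun y => u1 y i) x) - ∑ j, D2 h j (fun y => u2 y i) x :=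
        Finset.sum_sub_distrib _ _
      rw [s1, s2]
      have key : (u1 x i - u2 x i) / τ = (u1 x i - un x i) / τ - (u2 x i - un x i) / τ := by
        ring
      rw [key, e1, e2]
      ring
    have hz := homog_zero h τ hh hτ Ω un hdiv (fun x i => u1 x i - u2 x i) hw0 hweq
    funext x i
    have := congrFun (hz x) i
    simpa [sub_eq_zero] using this
  have hinj : Function.Injective (Lmap h τ Ω un) := by
    refine (injective_iff_map_eq_zero _).mpr ?_
    intro v hv
    have hw0 : ∀ x, x ∉ Ω \ bdry Ω → extI Ω v x = 0 := by
      intro x hx; simp [extI, hx]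
    have hweq : ∀ x ∈ Ω \ bdry Ω, ∀ i : Fin 3,
        extI Ω v x i / τ
          + 1/2 * (∑ j, (un (x - ee j) j * Dc h j (fun y => extI Ω v y i) (x - ee j)
              + un (x + ee j) j * Dc h j (fun y => extI Ω v y i) (x + ee j)))
          - (∑ j, D2 h j (fun y => extI Ω v y i) x) = 0 := by
      intro x hx i
      have h1 := congrFun (congrFun hv ⟨x, hx⟩) i
      simpa [Lmap, Phi] using h1
    have hz := homog_zero h τ hh hτ Ω un hdiv (extI Ω v) hw0 hweq
    funext x i
    have h1 := congrFun (hz x.1) i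
    simpa [extI, x.2] using h1
  have hsurj := LinearMap.injective_iff_surjective.mp hinj
  obtain ⟨v, hv⟩ := hsurj (fun x i => un x.1 i / τ + f x.1 i)
  have hs1 : ∀ x ∉ Ω, extI Ω v x = 0 := by
    intro x hx
    have hx' : x ∉ Ω \ bdry Ω := fun hc => hx (Finset.mem_sdiff.mp hc).1
    simp [extI, hx']
  have hs2 : ∀ x ∈ bdry Ω, extI Ω v x = 0 := by
    intro x hx
    have hx' : x ∉ Ω \ bdry Ω := fun hc => (Finset.mem_sdiff.mp hc).2 hx
    simp [extI, hx']
  have hs3 : ∀ x ∈ Ω \ bdry Ω, ∀ i : Fin 3,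
      (extI Ω v x i - un x i) / τ =
        -(1 / 2) * (∑ j, (un (x - ee j) j * Dc h j (fun y => extI Ω v y i) (x - ee j)
            + un (x + ee j) j * Dc h j (fun y => extI Ω v y i) (x + ee j)))
        + (∑ j, D2 h j (fun y => extI Ω v y i) x) + f x i := by
    intro x hx i
    have h1 := congrFun (congrFun hv ⟨x, hx⟩) i
    simp only [Lmap, LinearMap.coe_mk, AddHom.coe_mk, Phi] at h1
    have key : (extI Ω v x i - un x i) / τ = extI Ω v x i / τ - un x i / τ := by ring
    rw [key]
    linarith [h1]
  exact ⟨extI Ω v, ⟨hs1, hs2, hs3⟩, fun y hy => huniq y (extI Ω v) hy ⟨hs1, hs2, hs3⟩⟩
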